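/- Let G be a monoid acting on a field F by ring endomorphisms, k = F^G its fixed subfield, and V an F-vector space with a semi-linear G-action (σ(a·v) = σ(a)·σ(v) for a ∈ F, v ∈ V). Let ρ : G → GL_F(V) be a monoid homomorphism into the group of F-linear automorphisms of V, and set V_ρ := {w ∈ V : σ·w = ρ(σ)(w) for all σ ∈ G}. Then V_ρ is a k-subspace of V and the natural F-linear map F ⊗_k V_ρ → V, a ⊗ w ↦ a·w, is injective; equivalently, every family of elements of V_ρ that is linearly independent over k is linearly independent over F. -/
import Mathlib


/-- **Descent for semi-linear representations.**
Let a monoid `G` act on a field `F` by ring endomorphisms, with fixed field `k = Fᴳ`,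
and let `V` be an `F`-vector space with a semi-linear `G`-action
(`σ • (c • v) = (σ • c) • (σ • v)`).  Given an `F`-linear representation
`ρ : G →* GL_F(V)`, let `Vρ = {w ∈ V | σ • w = ρ(σ) w for all σ}`.  Then `Vρ` is a
`k`-subspace of `V` and the natural map `F ⊗ₖ Vρ → V` is injective; equivalently, every
family of elements of `Vρ` that is linearly independent over `k` is linearly
independent over `F`. -/
theorem fixed_vectors_tensor_injective
    (G F V : Type*) [Monoid G] [Field F] [MulSemiringAction G F]
    [AddCommGroup V] [Module F V] [DistribMulAction G V]
    (hsemi : ∀ (σ : G) (c : F) (v : V), σ • (c • v) = (σ • c) • (σ • v))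
    (ρ : G →* (V →ₗ[F] V)ˣ)
    (Vρ : Set V) (hVρ : Vρ = {w : V | ∀ σ : G, σ • w = (ρ σ : V →ₗ[F] V) w})
    (ι : Type*) (w : ι → V) (hw : ∀ i, w i ∈ Vρ)
    (hindep : ∀ (s : Finset ι) (cf : ι → F),
      (∀ i, cf i ∈ FixedPoints.subfield G F) →
      (∑ i ∈ s, cf i • w i) = 0 → ∀ i ∈ s, cf i = 0) :
    (∀ w₁ ∈ Vρ, ∀ w₂ ∈ Vρ, w₁ + w₂ ∈ Vρ) ∧
    (∀ c : F, c ∈ FixedPoints.subfield G F → ∀ w' ∈ Vρ, c • w' ∈ Vρ) ∧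
    LinearIndependent F w := by
  classical
  subst hVρ
  have hwσ : ∀ (i : ι) (σ : G), σ • w i = (ρ σ : V →ₗ[F] V) (w i) := fun i σ => hw i σ
  refine ⟨?_, ?_, ?_⟩
  · intro w₁ h1 w₂ h2 σ
    rw [smul_add, h1 σ, h2 σ, map_add]
  · intro c hc w' hw' σ
    rw [hsemi, hc σ, hw' σ, map_smul]
  · rw [linearIndependent_iff']
    intro s
    induction s using Finset.strongInduction with
    | _ s ih =>
      intro g hg
      by_contra hcon
      push_neg at hcon
      obtain ⟨j, hj, hgj⟩ := hcon
      set g' : ι → F := fun i => g i / g j with hg'def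
      have hg'j : g' j = 1 := div_self hgj
      have hg'sum : ∑ i ∈ s, g' i • w i = 0 := by
        have h0 : (g j)⁻¹ • (∑ i ∈ s, g i • w i) = 0 := by rw [hg, smul_zero]
        rw [Finset.smul_sum] at h0
        calc ∑ i ∈ s, g' i • w i = ∑ i ∈ s, (g j)⁻¹ • g i • w i := by
              refine Finset.sum_congr rfl fun i _ => ?_
              show (g i / g j) • w i = _
              rw [div_eq_inv_mul, mul_smul]
          _ = 0 := h0
      have hinv : ∀ (σ : G) (v : V),
          ((ρ σ)⁻¹ : (V →ₗ[F] V)ˣ).val ((ρ σ : V →ₗ[F] V) v) = v := by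
        intro σ v
        rw [← Module.End.mul_apply, ← Units.val_mul, inv_mul_cancel, Units.val_one,
          Module.End.one_apply]
      have hfix : ∀ i ∈ s, ∀ σ : G, σ • g' i = g' i := by
        intro i hi σ
        have h1 : ∑ i ∈ s, (σ • g' i) • w i = 0 := by
          have h0 : σ • (∑ i ∈ s, g' i • w i) = 0 := by rw [hg'sum, smul_zero]
          rw [Finset.smul_sum] at h0
          have h2 : ∑ i ∈ s, (σ • g' i) • ((ρ σ : V →ₗ[F] V) (w i)) = 0 := by
            refine Eq.trans ?_ h0
            refine Finset.sum_congr rfl fun i _ => ?_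
            rw [hsemi, hwσ]
          have h3 := congrArg (((ρ σ)⁻¹ : (V →ₗ[F] V)ˣ).val) h2
          rw [map_sum, map_zero] at h3
          refine Eq.trans ?_ h3
          refine Finset.sum_congr rfl fun i _ => ?_
          rw [map_smul, hinv]
        have hsub : ∑ i ∈ s, (σ • g' i - g' i) • w i = 0 := by
          simp only [sub_smul, Finset.sum_sub_distrib, h1, hg'sum, sub_zero]
        have hj0 : σ • g' j - g' j = 0 := by
          rw [hg'j, smul_one, sub_self]
        have hsub' : ∑ i ∈ s.erase j, (σ • g' i - g' i) • w i = 0 := by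
          rw [Finset.sum_erase s (by rw [hj0, zero_smul])]
          exact hsub
        have herase := ih (s.erase j) (Finset.erase_ssubset hj)
          (fun i => σ • g' i - g' i) hsub'
        rcases eq_or_ne i j with rfl | hne
        · rw [hg'j, smul_one]
        · have := herase i (Finset.mem_erase.mpr ⟨hne, hi⟩)
          exact sub_eq_zero.mp this
      set cf : ι → F := fun i => if i ∈ s then g' i else 0 with hcf
      have hcfmem : ∀ i, cf i ∈ FixedPoints.subfield G F := by
        intro i σ
        rw [hcf]
        by_cases hi : i ∈ s
        · simp only [hi, if_true]
          exact hfix i hi σ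
        · simp only [hi, if_false, smul_zero]
      have hcfsum : ∑ i ∈ s, cf i • w i = 0 := by
        rw [← hg'sum]
        refine Finset.sum_congr rfl fun i hi => ?_
        rw [hcf]; simp only [hi, if_true]
      have := hindep s cf hcfmem hcfsum j hj
      rw [hcf] at this
      simp only [hj, if_true] at this
      rw [hg'j] at this
      exact one_ne_zero this
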